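/- The CP majority solution R^CPM satisfies none of concatenation consistency (CCON), top-aligned consistency (TCON), and bottom-aligned consistency (BCON). -/

import Mathlib

namespace SocRank

/-- A coalitional ranking (a weak order on a set of feasible nonempty coalitions),
represented by its list of equivalence classes, listed from best to worst. -/
structure CoalRanking (X : Type*) where
  classes : List (Finset (Finset X))
  class_nonempty : ∀ C ∈ classes, C.Nonempty
  coal_nonempty : ∀ C ∈ classes, ∀ S ∈ C, S.Nonempty
  classes_disjoint : classes.Pairwise Disjoint

namespace CoalRanking

variable {X : Type*}

/-- The coalition domain `𝒟(≿)` of a coalitional ranking. -/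
def domain [DecidableEq X] (r : CoalRanking X) : Finset (Finset X) :=
  r.classes.foldr (· ∪ ·) ∅

/-- The list of equivalence classes of the restriction of a ranking to a set `D`
of coalitions. -/
def restrictClasses [DecidableEq X] (r : CoalRanking X) (D : Finset (Finset X)) :
    List (Finset (Finset X)) :=
  (r.classes.map (· ∩ D)).filter (fun C => decide C.Nonempty)

/-- Merging two lists of equivalence classes by aligning them at the top. -/
def zipUnion [DecidableEq X] :
    List (Finset (Finset X)) → List (Finset (Finset X)) → List (Finset (Finset X))
  | [], M => M
  | L, [] => L
  | A :: L, B :: M => (A ∪ B) :: zipUnion L M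

/-- `r` is a sum of the disjoint rankings `r₁` and `r₂`: its domain is the union of
the two domains and its restriction to the domain of `rᵢ` is `rᵢ`. -/
def IsSum [DecidableEq X] (r r₁ r₂ : CoalRanking X) : Prop :=
  Disjoint r₁.domain r₂.domain ∧
  r.domain = r₁.domain ∪ r₂.domain ∧
  r.restrictClasses r₁.domain = r₁.classes ∧
  r.restrictClasses r₂.domain = r₂.classes

/-- `r` is the concatenation sum `r₁ · r₂` of the disjoint rankings `r₁` and `r₂`. -/
def IsConcatSum [DecidableEq X] (r r₁ r₂ : CoalRanking X) : Prop :=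
  Disjoint r₁.domain r₂.domain ∧ r.classes = r₁.classes ++ r₂.classes

/-- `r` is the top-aligned sum `r₁ ⊨ r₂` of the disjoint rankings `r₁` and `r₂`. -/
def IsTopAlignedSum [DecidableEq X] (r r₁ r₂ : CoalRanking X) : Prop :=
  Disjoint r₁.domain r₂.domain ∧ r.classes = zipUnion r₁.classes r₂.classes

/-- `r` is the bottom-aligned sum `r₁ ⫤ r₂` of the disjoint rankings `r₁` and `r₂`. -/
def IsBottomAlignedSum [DecidableEq X] (r r₁ r₂ : CoalRanking X) : Prop :=
  Disjoint r₁.domain r₂.domain ∧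
  r.classes = (zipUnion r₁.classes.reverse r₂.classes.reverse).reverse

/-- Renaming the individuals of a coalitional ranking by a permutation `σ` of `X`:
the ranking `≿^σ`. -/
def mapPerm [DecidableEq X] (σ : Equiv.Perm X) (r : CoalRanking X) : CoalRanking X where
  classes := r.classes.map (fun C => C.image (fun S => S.image σ))
  class_nonempty := by
    intro C hC
    simp only [List.mem_map] at hC
    obtain ⟨C₀, hC₀, rfl⟩ := hC
    exact (r.class_nonempty C₀ hC₀).image _
  coal_nonempty := by
    intro C hC S hS
    simp only [List.mem_map] at hC
    obtain ⟨C₀, hC₀, rfl⟩ := hC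
    simp only [Finset.mem_image] at hS
    obtain ⟨S₀, hS₀, rfl⟩ := hS
    exact (r.coal_nonempty C₀ hC₀ S₀ hS₀).image _
  classes_disjoint := by
    refine List.Pairwise.map _ (fun {A B} h => ?_) r.classes_disjoint
    exact (Finset.disjoint_image
      (Finset.image_injective σ.injective)).mpr h

/-- Renaming the coalitions of a coalitional ranking by a permutation `π` of the set of
coalitions (mapping nonempty sets to nonempty sets): the ranking `≿_π`. -/
def mapCoalPerm [DecidableEq X] (π : Equiv.Perm (Finset X))
    (hπ : ∀ S : Finset X, S.Nonempty → (π S).Nonempty) (r : CoalRanking X) :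
    CoalRanking X where
  classes := r.classes.map (fun C => C.image π)
  class_nonempty := by
    intro C hC
    simp only [List.mem_map] at hC
    obtain ⟨C₀, hC₀, rfl⟩ := hC
    exact (r.class_nonempty C₀ hC₀).image _
  coal_nonempty := by
    intro C hC S hS
    simp only [List.mem_map] at hC
    obtain ⟨C₀, hC₀, rfl⟩ := hC
    simp only [Finset.mem_image] at hS
    obtain ⟨S₀, hS₀, rfl⟩ := hS
    exact hπ S₀ (r.coal_nonempty C₀ hC₀ S₀ hS₀)
  classes_disjoint := by
    refine List.Pairwise.map _ (fun {A B} h => ?_) r.classes_disjoint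
    exact (Finset.disjoint_image π.injective).mpr h

end CoalRanking

open CoalRanking

variable {X : Type*}

/-- A social ranking solution: a map assigning to every coalitional ranking a binary
relation on the individuals. -/
abbrev SRSMap (X : Type*) := CoalRanking X → X → X → Prop

/-- The symmetric part `I` of the social ranking. -/
def Ind (R : SRSMap X) (r : CoalRanking X) (x y : X) : Prop := R r x y ∧ R r y x

/-- The asymmetric part `P` of the social ranking. -/
def Pref (R : SRSMap X) (r : CoalRanking X) (x y : X) : Prop := R r x y ∧ ¬ R r y x

/-- Conditions (1)-(4) of consistency for the triple `(r₁, r₂, r)`. -/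
def ConsistentAt (R : SRSMap X) (r₁ r₂ r : CoalRanking X) : Prop :=
  ∀ x y : X,
    (Ind R r₁ x y → Ind R r₂ x y → Ind R r x y) ∧
    (Ind R r₁ x y → Pref R r₂ x y → Pref R r x y) ∧
    (Pref R r₁ x y → Ind R r₂ x y → Pref R r x y) ∧
    (Pref R r₁ x y → Pref R r₂ x y → Pref R r x y)

/-- Consistency (CON). -/
def CON [DecidableEq X] (R : SRSMap X) : Prop :=
  ∀ r₁ r₂ r : CoalRanking X, IsSum r r₁ r₂ → ConsistentAt R r₁ r₂ r

/-- Concatenation consistency (CCON). -/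
def CCON [DecidableEq X] (R : SRSMap X) : Prop :=
  ∀ r₁ r₂ r : CoalRanking X, IsConcatSum r r₁ r₂ → ConsistentAt R r₁ r₂ r

/-- Top-aligned consistency (TCON). -/
def TCON [DecidableEq X] (R : SRSMap X) : Prop :=
  ∀ r₁ r₂ r : CoalRanking X, IsTopAlignedSum r r₁ r₂ → ConsistentAt R r₁ r₂ r

/-- Bottom-aligned consistency (BCON). -/
def BCON [DecidableEq X] (R : SRSMap X) : Prop :=
  ∀ r₁ r₂ r : CoalRanking X, IsBottomAlignedSum r r₁ r₂ → ConsistentAt R r₁ r₂ r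

/-- II-concatenation consistency. -/
def IICCON [DecidableEq X] (R : SRSMap X) : Prop :=
  ∀ r₁ r₂ r : CoalRanking X, IsConcatSum r r₁ r₂ →
    ∀ x y : X, Ind R r₁ x y → Ind R r₂ x y → Ind R r x y

/-- IP-concatenation consistency. -/
def IPCCON [DecidableEq X] (R : SRSMap X) : Prop :=
  ∀ r₁ r₂ r : CoalRanking X, IsConcatSum r r₁ r₂ →
    ∀ x y : X, Ind R r₁ x y → Pref R r₂ x y → Pref R r x y

/-- PI-concatenation consistency. -/
def PICCON [DecidableEq X] (R : SRSMap X) : Prop :=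
  ∀ r₁ r₂ r : CoalRanking X, IsConcatSum r r₁ r₂ →
    ∀ x y : X, Pref R r₁ x y → Ind R r₂ x y → Pref R r x y

/-- PP-concatenation consistency. -/
def PPCCON [DecidableEq X] (R : SRSMap X) : Prop :=
  ∀ r₁ r₂ r : CoalRanking X, IsConcatSum r r₁ r₂ →
    ∀ x y : X, Pref R r₁ x y → Pref R r₂ x y → Pref R r x y

/-- `x_k`: the number of coalitions of the class `C` containing `x`. -/
def cnt [DecidableEq X] (x : X) (C : Finset (Finset X)) : ℕ :=
  (C.filter (fun S => x ∈ S)).card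

/-- The vector `θ_≿(x) = (x₁, …, x_l)`. -/
def theta [DecidableEq X] (r : CoalRanking X) (x : X) : List ℕ :=
  r.classes.map (cnt x)

/-- `sign`: `1` on positive numbers, `0` otherwise. -/
def sgn (n : ℕ) : ℕ := if 0 < n then 1 else 0

/-- The vector `θ̇_≿(x) = (sign(x₁), …, sign(x_l))`. -/
def thetaDot [DecidableEq X] (r : CoalRanking X) (x : X) : List ℕ :=
  (theta r x).map sgn

/-- The lexicographic order `≥^L` on vectors (of equal length). -/
def lexGE : List ℕ → List ℕ → Prop
  | _, [] => True
  | [], _ :: _ => False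
  | a :: as, b :: bs => b < a ∨ (a = b ∧ lexGE as bs)

/-- The lexicographic excellence solution (lex-cel) `R^L`. -/
def lexcel [DecidableEq X] : SRSMap X := fun r x y => lexGE (theta r x) (theta r y)

/-- The sign lexicographic excellence solution (S lex-cel) `R^{SL}`. -/
def slexcel [DecidableEq X] : SRSMap X := fun r x y => lexGE (thetaDot r x) (thetaDot r y)

/-- The plurality solution `R^P`. -/
def plurality [DecidableEq X] : SRSMap X := fun r x y =>
  (theta r y).headD 0 ≤ (theta r x).headD 0

/-- The sign plurality solution `R^{SP}`. -/
def splurality [DecidableEq X] : SRSMap X := fun r x y =>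
  sgn ((theta r y).headD 0) ≤ sgn ((theta r x).headD 0)

/-- The anti-plurality solution `R^{AP}`. -/
def antiplurality [DecidableEq X] : SRSMap X := fun r x y =>
  (theta r x).getLastD 0 ≤ (theta r y).getLastD 0

/-- `e_≿(x)`: the largest `k` such that `x` belongs to every coalition of each of the
first `k` equivalence classes. -/
def eIIS [DecidableEq X] (r : CoalRanking X) (x : X) : ℕ :=
  (r.classes.takeWhile (fun C => decide (∀ S ∈ C, x ∈ S))).length

/-- The intersection initial segment solution (IIS) `R^{IIS}`. -/
def iis [DecidableEq X] : SRSMap X := fun r x y => eIIS r y ≤ eIIS r x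

/-- The index of the equivalence class a coalition belongs to. -/
def classIdx [DecidableEq X] (r : CoalRanking X) (S : Finset X) : ℕ :=
  r.classes.findIdx (fun C => decide (S ∈ C))

/-- `C_{xy}`: the number of CP comparisons in favour of `x` against `y`. -/
def cpCount [DecidableEq X] [Fintype X] (r : CoalRanking X) (x y : X) : ℕ :=
  ((Finset.univ : Finset (Finset X)).filter (fun S =>
    S.Nonempty ∧ x ∉ S ∧ y ∉ S ∧ insert x S ∈ r.domain ∧ insert y S ∈ r.domain ∧
    classIdx r (insert x S) < classIdx r (insert y S))).card

/-- The Ceteris Paribus majority solution `R^{CPM}`. -/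
def cpm [DecidableEq X] [Fintype X] : SRSMap X := fun r x y =>
  cpCount r y x ≤ cpCount r x y

/-- Neutrality (NT). -/
def NT [DecidableEq X] (R : SRSMap X) : Prop :=
  ∀ (σ : Equiv.Perm X) (r : CoalRanking X) (x y : X),
    R (r.mapPerm σ) (σ x) (σ y) ↔ R r x y

/-- Weak coalitional anonymity (WCA). -/
def WCA [DecidableEq X] (R : SRSMap X) : Prop :=
  ∀ (x y : X) (π : Equiv.Perm (Finset X))
    (hπ : ∀ S : Finset X, S.Nonempty → (π S).Nonempty),
    (∀ S : Finset X, x ∈ S → x ∈ π S) → (∀ S : Finset X, y ∈ S → y ∈ π S) →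
    ∀ r : CoalRanking X,
      (R (r.mapCoalPerm π hπ) x y ↔ R r x y) ∧ (R (r.mapCoalPerm π hπ) y x ↔ R r y x)

/-- The weak union very important person property (WUVIP). -/
def WUVIP (R : SRSMap X) : Prop :=
  ∀ (r : CoalRanking X) (A B : Finset (Finset X)), r.classes = [A, B] →
    ∀ x y : X, (∃ S ∈ A, x ∈ S) → (∀ S ∈ A, y ∉ S) → Pref R r x y

/-- All indifference all winners (AIAW). -/
def AIAW [DecidableEq X] (R : SRSMap X) : Prop :=
  ∀ r : CoalRanking X, r.classes.length ≤ 1 →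
    (∀ x y : X, (∃ S ∈ r.domain, x ∈ S) → (∃ S ∈ r.domain, y ∈ S) → Ind R r x y) ∧
    (∀ x z : X, (∃ S ∈ r.domain, x ∈ S) → (∀ S ∈ r.domain, z ∉ S) → Pref R r x z)

/-- Independence of the decomposition of the worst sets (IDWS). -/
def IDWS [DecidableEq X] (R : SRSMap X) : Prop :=
  ∀ (r r' : CoalRanking X) (L G : List (Finset (Finset X))) (W : Finset (Finset X)),
    L ≠ [] → r.classes = L ++ [W] → r'.classes = L ++ G →
    G.foldr (· ∪ ·) ∅ = W →
    ∀ x y : X, Pref R r x y → Pref R r' x y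

/-- Independence of the addition of the worst sets (IAWS). -/
def IAWS [DecidableEq X] (R : SRSMap X) : Prop :=
  ∀ (r r' : CoalRanking X) (G : Finset (Finset X)),
    r'.classes = r.classes ++ [G] → (∀ S ∈ G, S ∉ r.domain) →
    ∀ x y : X, Pref R r x y → Pref R r' x y

/-- Tops-only (TO). -/
def TO (R : SRSMap X) : Prop :=
  ∀ (r r' : CoalRanking X) (A : Finset (Finset X)),
    r.classes.head? = some A → r'.classes.head? = some A → R r = R r'

/-- The dual S lex-cel `R^{DSL}`. -/
def dslexcel [DecidableEq X] : SRSMap X := fun r x y =>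
  lexGE ((thetaDot r y).reverse) ((thetaDot r x).reverse)

/-- The inverse dual S lex-cel `R^{IDSL}`. -/
def idslexcel [DecidableEq X] : SRSMap X := fun r x y => dslexcel r y x

/-- The vector `θ̃_≿(x)` used by the S lex-cel with precedence on unanimity. -/
def tildeTheta [DecidableEq X] (r : CoalRanking X) (x : X) : List ℕ :=
  r.classes.map (fun C => if cnt x C = C.card then 2 else if 0 < cnt x C then 1 else 0)

/-- The S lex-cel with a particular precedence on unanimity `R^{SLUN}`. -/
def slun [DecidableEq X] : SRSMap X := fun r x y =>
  lexGE (tildeTheta r x) (tildeTheta r y)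

/-- The S sum score `Σ_k sign(x_k)`. -/
def ssum [DecidableEq X] (r : CoalRanking X) (x : X) : ℕ := (thetaDot r x).sum

/-- The S sum rule with tie-breaking by S lex-cel `R^{SSUM,SL}`. -/
def ssumSL [DecidableEq X] : SRSMap X := fun r x y =>
  ssum r y < ssum r x ∨ (ssum r x = ssum r y ∧ slexcel r x y)

end SocRank

open SocRank


namespace SocRank

section Aux
set_option linter.unusedSectionVars false

variable {X : Type*} [DecidableEq X] [Fintype X]

lemma insert_ne_of_not_mem {b : X} {S T : Finset X} (hb : b ∉ T) : insert b S ≠ T :=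
  fun h => hb (h ▸ Finset.mem_insert_self b S)

lemma insert_ne_singleton {a : X} {S : Finset X} (hS : S.Nonempty) (ha : a ∉ S) :
    insert a S ≠ ({a} : Finset X) := by
  intro h
  have hsub : S ⊆ {a} := (Finset.subset_insert a S).trans h.le
  rcases Finset.subset_singleton_iff.mp hsub with rfl | rfl
  · exact hS.ne_empty rfl
  · exact ha (Finset.mem_singleton_self a)

lemma eq_singleton_of_insert_eq {a c : X} {S : Finset X} (hS : S.Nonempty) (ha : a ∉ S)
    (h : insert a S = ({a, c} : Finset X)) : S = {c} := by
  have hsub : S ⊆ {c} := by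
    intro x hx
    have hx' : x ∈ ({a, c} : Finset X) := h ▸ Finset.mem_insert_of_mem hx
    simp only [Finset.mem_insert, Finset.mem_singleton] at hx' ⊢
    rcases hx' with rfl | rfl
    · exact absurd hx ha
    · rfl
  rcases Finset.subset_singleton_iff.mp hsub with rfl | h
  · exact absurd rfl hS.ne_empty
  · exact h

lemma cpCount_eq_zero' (r : CoalRanking X) (x y : X)
    (h : ∀ S : Finset X, S.Nonempty → x ∉ S → y ∉ S → insert x S ∈ r.domain →
      insert y S ∈ r.domain → ¬ classIdx r (insert x S) < classIdx r (insert y S)) :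
    cpCount r x y = 0 := by
  unfold cpCount
  rw [Finset.card_eq_zero, Finset.filter_eq_empty_iff]
  rintro S - ⟨h1, h2, h3, h4, h5, h6⟩
  exact h S h1 h2 h3 h4 h5 h6

lemma cpCount_eq_one' (r : CoalRanking X) (x y c : X) (hxc : x ≠ c) (hyc : y ≠ c)
    (hdom : ∀ S : Finset X, S.Nonempty → x ∉ S → insert x S ∈ r.domain → S = {c})
    (hx : insert x ({c} : Finset X) ∈ r.domain) (hy : insert y ({c} : Finset X) ∈ r.domain)
    (hlt : classIdx r (insert x ({c} : Finset X)) < classIdx r (insert y ({c} : Finset X))) :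
    cpCount r x y = 1 := by
  unfold cpCount
  rw [Finset.card_eq_one]
  refine ⟨({c} : Finset X), ?_⟩
  ext S
  simp only [Finset.mem_filter, Finset.mem_univ, true_and, Finset.mem_singleton]
  constructor
  · rintro ⟨h1, h2, h3, h4, h5, h6⟩
    exact hdom S h1 h2 h4
  · rintro rfl
    exact ⟨Finset.singleton_nonempty c, by simp [hxc], by simp [hyc], hx, hy, hlt⟩

lemma ind_symm {R : SRSMap X} {r : CoalRanking X} {x y : X} (h : Ind R r x y) :
    Ind R r y x := ⟨h.2, h.1⟩

lemma ind_of_no_insert (r : CoalRanking X) (x y : X)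
    (h : ∀ S : Finset X, insert x S ∉ r.domain) : Ind cpm r x y := by
  have h1 : cpCount r x y = 0 :=
    cpCount_eq_zero' r x y (fun S _ _ _ h4 _ => absurd h4 (h S))
  have h2 : cpCount r y x = 0 :=
    cpCount_eq_zero' r y x (fun S _ _ _ _ h5 => absurd h5 (h S))
  exact ⟨le_of_eq (h2.trans h1.symm), le_of_eq (h1.trans h2.symm)⟩

lemma cpm_pref (r : CoalRanking X) (a b c : X) (hac : a ≠ c) (hbc : b ≠ c)
    (hdA : ∀ S : Finset X, S.Nonempty → a ∉ S → insert a S ∈ r.domain → S = {c})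
    (hdB : ∀ S : Finset X, S.Nonempty → b ∉ S → insert b S ∈ r.domain → S = {c})
    (hA : insert a ({c} : Finset X) ∈ r.domain) (hB : insert b ({c} : Finset X) ∈ r.domain)
    (hlt : classIdx r (insert a ({c} : Finset X)) < classIdx r (insert b ({c} : Finset X))) :
    Pref cpm r a b := by
  have h1 : cpCount r a b = 1 := cpCount_eq_one' r a b c hac hbc hdA hA hB hlt
  have h2 : cpCount r b a = 0 := by
    refine cpCount_eq_zero' r b a (fun S hne hb ha h4 h5 => ?_)
    rw [hdB S hne hb h4]
    omega
  refine ⟨?_, ?_⟩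
  · show cpCount r b a ≤ cpCount r a b
    omega
  · show ¬ cpCount r a b ≤ cpCount r b a
    omega

/-- A coalitional ranking with one equivalence class. -/
def mk1 (A : Finset (Finset X)) (hA : A.Nonempty) (h2 : ∀ S ∈ A, S.Nonempty) :
    CoalRanking X where
  classes := [A]
  class_nonempty := by
    intro C hC
    rw [List.mem_singleton] at hC
    subst hC; exact hA
  coal_nonempty := by
    intro C hC S hS
    rw [List.mem_singleton] at hC
    subst hC; exact h2 S hS
  classes_disjoint := by simp

/-- A coalitional ranking with two equivalence classes. -/
def mk2 (A B : Finset (Finset X)) (hA : A.Nonempty) (hB : B.Nonempty)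
    (h2 : ∀ S ∈ A, S.Nonempty) (h3 : ∀ S ∈ B, S.Nonempty) (hd : Disjoint A B) :
    CoalRanking X where
  classes := [A, B]
  class_nonempty := by
    intro C hC
    simp only [List.mem_cons, List.mem_singleton, List.not_mem_nil, or_false] at hC
    rcases hC with rfl | rfl
    · exact hA
    · exact hB
  coal_nonempty := by
    intro C hC S hS
    simp only [List.mem_cons, List.mem_singleton, List.not_mem_nil, or_false] at hC
    rcases hC with rfl | rfl
    · exact h2 S hS
    · exact h3 S hS
  classes_disjoint := by simp [List.pairwise_cons, hd]

lemma mk1_classes (A : Finset (Finset X)) (hA h2) :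
    (mk1 A hA h2).classes = [A] := rfl

lemma mk2_classes (A B : Finset (Finset X)) (hA hB h2 h3 hd) :
    (mk2 A B hA hB h2 h3 hd).classes = [A, B] := rfl

lemma mk1_domain (A : Finset (Finset X)) (hA h2) :
    (mk1 A hA h2).domain = A := by
  simp [mk1, CoalRanking.domain]

lemma mk2_domain (A B : Finset (Finset X)) (hA hB h2 h3 hd) :
    (mk2 A B hA hB h2 h3 hd).domain = A ∪ B := by
  simp [mk2, CoalRanking.domain]

end Aux

end SocRank

set_option maxHeartbeats 1000000 in
/-- CP majority satisfies none of CCON, TCON and BCON. -/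
theorem cpm_not_ccon_not_tcon_not_bcon {X : Type*} [DecidableEq X] [Fintype X]
    (hX : 3 ≤ Fintype.card X) :
    ¬ CCON (cpm : SRSMap X) ∧ ¬ TCON (cpm : SRSMap X) ∧ ¬ BCON (cpm : SRSMap X) := by
  classical
  obtain ⟨s, -, hs3⟩ := Finset.exists_subset_card_eq (s := (Finset.univ : Finset X)) (n := 3)
    (by simpa using hX)
  obtain ⟨a, b, c, hab, hac, hbc, -⟩ := Finset.card_eq_three.mp hs3
  -- basic membership facts
  have hanbc : a ∉ ({b, c} : Finset X) := by simp [hab, hac]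
  have hbnac : b ∉ ({a, c} : Finset X) := by simp [hab.symm, hbc]
  have hbna : b ∉ ({a} : Finset X) := by simp [hab.symm]
  -- inequalities between coalitions
  have hACBC : ({a, c} : Finset X) ≠ {b, c} := fun h => hanbc (h ▸ Finset.mem_insert_self a {c})
  have hABC : ({a} : Finset X) ≠ {b, c} := by
    intro h
    have : b ∈ ({a} : Finset X) := by rw [h]; simp
    exact hbna this
  have hAAC : ({a} : Finset X) ≠ {a, c} := by
    intro h
    have : c ∈ ({a} : Finset X) := by rw [h]; simp
    rw [Finset.mem_singleton] at this
    exact hac this.symm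
  -- nonemptiness facts for the classes
  have pfA : ({{a, c}} : Finset (Finset X)).Nonempty := Finset.singleton_nonempty _
  have pfB : ({{b, c}} : Finset (Finset X)).Nonempty := Finset.singleton_nonempty _
  have pfa : ({{a}} : Finset (Finset X)).Nonempty := Finset.singleton_nonempty _
  have pfU : (({{a}} : Finset (Finset X)) ∪ {{b, c}}).Nonempty :=
    pfa.mono Finset.subset_union_left
  have pfA' : ∀ S ∈ ({{a, c}} : Finset (Finset X)), S.Nonempty := by
    intro S hS; rw [Finset.mem_singleton] at hS; subst hS; exact Finset.insert_nonempty _ _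
  have pfB' : ∀ S ∈ ({{b, c}} : Finset (Finset X)), S.Nonempty := by
    intro S hS; rw [Finset.mem_singleton] at hS; subst hS; exact Finset.insert_nonempty _ _
  have pfa' : ∀ S ∈ ({{a}} : Finset (Finset X)), S.Nonempty := by
    intro S hS; rw [Finset.mem_singleton] at hS; subst hS; exact Finset.singleton_nonempty _
  have pfU' : ∀ S ∈ (({{a}} : Finset (Finset X)) ∪ {{b, c}}), S.Nonempty := by
    intro S hS
    simp only [Finset.mem_union, Finset.mem_singleton] at hS
    rcases hS with rfl | rfl
    · exact Finset.singleton_nonempty _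
    · exact Finset.insert_nonempty _ _
  -- disjointness facts for the classes
  have dAB : Disjoint ({{a, c}} : Finset (Finset X)) {{b, c}} :=
    Finset.disjoint_singleton.mpr hACBC
  have daA : Disjoint ({{a}} : Finset (Finset X)) {{a, c}} :=
    Finset.disjoint_singleton.mpr hAAC
  have daB : Disjoint ({{a}} : Finset (Finset X)) {{b, c}} :=
    Finset.disjoint_singleton.mpr hABC
  have dUA : Disjoint (({{a}} : Finset (Finset X)) ∪ {{b, c}}) {{a, c}} :=
    Finset.disjoint_union_left.mpr ⟨daA, dAB.symm⟩
  -- the rankings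
  set r2 : CoalRanking X := mk1 {{b, c}} pfB pfB' with hr2
  set r1c : CoalRanking X := mk1 {{a, c}} pfA pfA' with hr1c
  set rC : CoalRanking X := mk2 {{a, c}} {{b, c}} pfA pfB pfA' pfB' dAB with hrC
  set r1t : CoalRanking X := mk2 {{a}} {{a, c}} pfa pfA pfa' pfA' daA with hr1t
  set rT : CoalRanking X :=
    mk2 (({{a}} : Finset (Finset X)) ∪ {{b, c}}) {{a, c}} pfU pfA pfU' pfA' dUA with hrT
  set r1b : CoalRanking X := mk2 {{a, c}} {{a}} pfA pfa pfA' pfa' daA.symm with hr1b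
  set rB : CoalRanking X :=
    mk2 {{a, c}} (({{a}} : Finset (Finset X)) ∪ {{b, c}}) pfA pfU pfA' pfU' dUA.symm with hrB
  -- no coalition of the form insert b S lies in the various r₁ domains
  have hnbC : ∀ S : Finset X, insert b S ∉ r1c.domain := by
    intro S
    rw [hr1c, mk1_domain, Finset.mem_singleton]
    exact insert_ne_of_not_mem hbnac
  have hnbT : ∀ S : Finset X, insert b S ∉ r1t.domain := by
    intro S
    rw [hr1t, mk2_domain]
    simp only [Finset.mem_union, Finset.mem_singleton, not_or]
    exact ⟨insert_ne_of_not_mem hbna, insert_ne_of_not_mem hbnac⟩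
  have hnbB : ∀ S : Finset X, insert b S ∉ r1b.domain := by
    intro S
    rw [hr1b, mk2_domain]
    simp only [Finset.mem_union, Finset.mem_singleton, not_or]
    exact ⟨insert_ne_of_not_mem hbnac, insert_ne_of_not_mem hbna⟩
  have hnar2 : ∀ S : Finset X, insert a S ∉ r2.domain := by
    intro S
    rw [hr2, mk1_domain, Finset.mem_singleton]
    exact insert_ne_of_not_mem hanbc
  -- indifferences on the components
  have ind1c : Ind cpm r1c a b := ind_symm (ind_of_no_insert r1c b a hnbC)
  have ind1t : Ind cpm r1t a b := ind_symm (ind_of_no_insert r1t b a hnbT)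
  have ind1b : Ind cpm r1b a b := ind_symm (ind_of_no_insert r1b b a hnbB)
  have ind2 : Ind cpm r2 a b := ind_of_no_insert r2 a b hnar2
  -- strict preference on the concatenation sum rC
  have prefC : Pref cpm rC a b := by
    refine cpm_pref rC a b c hac hbc ?_ ?_ ?_ ?_ ?_
    · intro S hne ha h
      rw [hrC, mk2_domain] at h
      simp only [Finset.mem_union, Finset.mem_singleton] at h
      rcases h with h | h
      · exact eq_singleton_of_insert_eq hne ha h
      · exact absurd h (insert_ne_of_not_mem hanbc)
    · intro S hne hb h
      rw [hrC, mk2_domain] at h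
      simp only [Finset.mem_union, Finset.mem_singleton] at h
      rcases h with h | h
      · exact absurd h (insert_ne_of_not_mem hbnac)
      · exact eq_singleton_of_insert_eq hne hb h
    · rw [hrC, mk2_domain]; simp
    · rw [hrC, mk2_domain]; simp
    · have h1 : classIdx rC (insert a ({c} : Finset X)) = 0 := by
        unfold classIdx
        rw [hrC, mk2_classes]
        simp [List.findIdx_cons]
      have h2 : classIdx rC (insert b ({c} : Finset X)) = 1 := by
        unfold classIdx
        rw [hrC, mk2_classes]
        simp [List.findIdx_cons, hACBC.symm]
      omega
  -- strict preference (for b over a) on the top-aligned sum rT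
  have prefT : Pref cpm rT b a := by
    refine cpm_pref rT b a c hbc hac ?_ ?_ ?_ ?_ ?_
    · intro S hne hb h
      rw [hrT, mk2_domain] at h
      simp only [Finset.mem_union, Finset.mem_singleton] at h
      rcases h with (h | h) | h
      · exact absurd h (insert_ne_of_not_mem hbna)
      · exact eq_singleton_of_insert_eq hne hb h
      · exact absurd h (insert_ne_of_not_mem hbnac)
    · intro S hne ha h
      rw [hrT, mk2_domain] at h
      simp only [Finset.mem_union, Finset.mem_singleton] at h
      rcases h with (h | h) | h
      · exact absurd h (insert_ne_singleton hne ha)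
      · exact absurd h (insert_ne_of_not_mem hanbc)
      · exact eq_singleton_of_insert_eq hne ha h
    · rw [hrT, mk2_domain]; simp
    · rw [hrT, mk2_domain]; simp
    · have h1 : classIdx rT (insert b ({c} : Finset X)) = 0 := by
        unfold classIdx
        rw [hrT, mk2_classes]
        simp [List.findIdx_cons]
      have h2 : classIdx rT (insert a ({c} : Finset X)) = 1 := by
        unfold classIdx
        rw [hrT, mk2_classes]
        simp [List.findIdx_cons, hAAC.symm, hACBC]
      omega
  -- strict preference on the bottom-aligned sum rB
  have prefB : Pref cpm rB a b := by
    refine cpm_pref rB a b c hac hbc ?_ ?_ ?_ ?_ ?_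
    · intro S hne ha h
      rw [hrB, mk2_domain] at h
      simp only [Finset.mem_union, Finset.mem_singleton] at h
      rcases h with h | (h | h)
      · exact eq_singleton_of_insert_eq hne ha h
      · exact absurd h (insert_ne_singleton hne ha)
      · exact absurd h (insert_ne_of_not_mem hanbc)
    · intro S hne hb h
      rw [hrB, mk2_domain] at h
      simp only [Finset.mem_union, Finset.mem_singleton] at h
      rcases h with h | (h | h)
      · exact absurd h (insert_ne_of_not_mem hbnac)
      · exact absurd h (insert_ne_of_not_mem hbna)
      · exact eq_singleton_of_insert_eq hne hb h
    · rw [hrB, mk2_domain]; simp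
    · rw [hrB, mk2_domain]; simp
    · have h1 : classIdx rB (insert a ({c} : Finset X)) = 0 := by
        unfold classIdx
        rw [hrB, mk2_classes]
        simp [List.findIdx_cons]
      have h2 : classIdx rB (insert b ({c} : Finset X)) = 1 := by
        unfold classIdx
        rw [hrB, mk2_classes]
        simp [List.findIdx_cons, hACBC.symm]
      omega
  -- domain disjointness of the summands
  have ddC : Disjoint r1c.domain r2.domain := by
    rw [hr1c, hr2, mk1_domain, mk1_domain]; exact dAB
  have ddT : Disjoint r1t.domain r2.domain := by
    rw [hr1t, hr2, mk2_domain, mk1_domain]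
    exact Finset.disjoint_union_left.mpr ⟨daB, dAB⟩
  have ddB : Disjoint r1b.domain r2.domain := by
    rw [hr1b, hr2, mk2_domain, mk1_domain]
    exact Finset.disjoint_union_left.mpr ⟨dAB, daB⟩
  refine ⟨?_, ?_, ?_⟩
  · -- CCON fails
    intro hcon
    have hsum : CoalRanking.IsConcatSum rC r1c r2 := ⟨ddC, rfl⟩
    have := ((hcon r1c r2 rC hsum) a b).1 ind1c ind2
    exact prefC.2 this.2
  · -- TCON fails
    intro hcon
    have hsum : CoalRanking.IsTopAlignedSum rT r1t r2 := ⟨ddT, rfl⟩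
    have := ((hcon r1t r2 rT hsum) a b).1 ind1t ind2
    exact prefT.2 this.1
  · -- BCON fails
    intro hcon
    have hsum : CoalRanking.IsBottomAlignedSum rB r1b r2 := ⟨ddB, rfl⟩
    have := ((hcon r1b r2 rB hsum) a b).1 ind1b ind2
    exact prefB.2 this.2
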